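/- Let f be a transcendental meromorphic function having a finite asymptotic value. Then f has no Baker wandering domain. In particular, a transcendental meromorphic function with an omitted value has no Baker wandering domain. -/

import Mathlib

open OnePoint Topology Filter Set

noncomputable section

/-- The Riemann sphere, modeled as the one-point compactification of `ℂ`. -/
abbrev Sph : Type := OnePoint ℂ

noncomputable instance : UniformSpace Sph := uniformSpaceOfCompactR1

/-- Extend `f : ℂ → Sph` to the sphere by the convention `f ∞ = ∞`
(used only to define iteration; `∞` and its preimages lie in the Julia set anyway). -/
def lift (f : ℂ → Sph) : Sph → Sph := fun w => Option.elim w ∞ f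

/-- The Fatou set: points having a neighborhood on which the family of iterates
is (uniformly) equicontinuous, i.e. normal. -/
def FatouSet (f : ℂ → Sph) : Set Sph :=
  {w | ∃ U : Set Sph, IsOpen U ∧ w ∈ U ∧ EquicontinuousOn (fun n : ℕ => (lift f)^[n]) U}

def JuliaSet (f : ℂ → Sph) : Set Sph := (FatouSet f)ᶜ

/-- `U` is a Fatou component: a connected component of the Fatou set. -/
def FatouComp (f : ℂ → Sph) (U : Set Sph) : Prop :=
  ∃ w ∈ FatouSet f, U = connectedComponentIn (FatouSet f) w

/-- `V = Uₙ`: `V` is the Fatou component containing `fⁿ(U)`. -/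
def IterComp (f : ℂ → Sph) (U : Set Sph) (n : ℕ) (V : Set Sph) : Prop :=
  FatouComp f V ∧ (lift f)^[n] '' U ⊆ V

/-- `a ∈ ℂ` is an omitted value of `f`. -/
def OmittedC (f : ℂ → Sph) (a : ℂ) : Prop := ∀ z : ℂ, f z ≠ (a : Sph)

/-- `f : ℂ → Sph` is meromorphic on `ℂ`: continuous (into the sphere), locally given by an
analytic function where finite, and with isolated points of infinitude (poles). -/
def MeroC (f : ℂ → Sph) : Prop :=
  Continuous f ∧
  (∀ z : ℂ, f z ≠ ∞ → ∃ g : ℂ → ℂ, AnalyticAt ℂ g z ∧ ∀ᶠ w in nhds z, f w = (g w : Sph)) ∧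
  (∀ z : ℂ, f z = ∞ → ∀ᶠ w in nhdsWithin z {z}ᶜ, f w ≠ ∞)

def IsRationalC (f : ℂ → Sph) : Prop :=
  ∃ p q : Polynomial ℂ, q ≠ 0 ∧ ∀ z : ℂ, q.eval z ≠ 0 → f z = ((p.eval z / q.eval z : ℂ) : Sph)

/-- Transcendental meromorphic function on `ℂ`. -/
def TranscMero (f : ℂ → Sph) : Prop := MeroC f ∧ ¬ IsRationalC f

/-- The class `M`: at least two poles, or one pole which is not an omitted value. -/
def InM (f : ℂ → Sph) : Prop :=
  (∃ p q : ℂ, p ≠ q ∧ f p = ∞ ∧ f q = ∞) ∨ (∃ p : ℂ, f p = ∞ ∧ ∃ z : ℂ, f z = (p : Sph))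

/-- The connected components of the complement of `S` in the sphere. -/
def complComps (S : Set Sph) : Set (Set Sph) := {C | ∃ x ∈ Sᶜ, C = connectedComponentIn Sᶜ x}

/-- Simple connectivity (connectivity 1): the complement has at most one component. -/
def SimplyConnSet (S : Set Sph) : Prop := (complComps S).Subsingleton

def MultConnSet (S : Set Sph) : Prop := ¬ SimplyConnSet S

/-- Connectivity exactly 2. -/
def DoublyConnSet (S : Set Sph) : Prop := ∃ C D, C ≠ D ∧ complComps S = {C, D}

/-- Complete invariance: `f⁻¹(U) = U`. -/
def CompInv (f : ℂ → Sph) (U : Set Sph) : Prop := ∀ z : Sph, lift f z ∈ U ↔ z ∈ U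

/-- A closed curve in `ℂ` (as a set: the image of a loop). -/
def IsClosedCurve (Γ : Set ℂ) : Prop :=
  ∃ γ : ℝ → ℂ, ContinuousOn γ (Set.Icc 0 1) ∧ γ 0 = γ 1 ∧ Γ = γ '' Set.Icc 0 1

/-- A Jordan curve in `ℂ`. -/
def IsJordanCurve (Γ : Set ℂ) : Prop :=
  ∃ γ : ℝ → ℂ, ContinuousOn γ (Set.Icc 0 1) ∧ γ 0 = γ 1 ∧ Set.InjOn γ (Set.Ico 0 1) ∧
    Γ = γ '' Set.Icc 0 1

/-- `B(K)`: the union of the bounded components of the complement of `K` in `ℂ`. -/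
def Bset (K : Set ℂ) : Set ℂ :=
  {z | z ∉ K ∧ Bornology.IsBounded (connectedComponentIn Kᶜ z)}

/-- The round open annulus `r < |z| < R`. -/
def Ann (r R : ℝ) : Set ℂ := {z | r < ‖z‖ ∧ ‖z‖ < R}

/-- `H` is a Herman ring of (least) period `p`: a doubly connected `p`-periodic Fatou component
on which `f^p` is topologically conjugate to an irrational rotation of an annulus. -/
def IsHermanRing (f : ℂ → Sph) (H : Set Sph) (p : ℕ) : Prop :=
  FatouComp f H ∧ 0 < p ∧ (∀ z ∈ H, (lift f)^[p] z ∈ H) ∧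
  (∀ q : ℕ, 0 < q → q < p → ¬ (∀ z ∈ H, (lift f)^[q] z ∈ H)) ∧
  DoublyConnSet H ∧
  ∃ r R θ : ℝ, 0 ≤ r ∧ r < R ∧ Irrational θ ∧
    ∃ (φ : Sph → ℂ) (ψ : ℂ → Sph),
      ContinuousOn φ H ∧ Set.BijOn φ H (Ann r R) ∧
      ContinuousOn ψ (Ann r R) ∧ (∀ z ∈ H, ψ (φ z) = z) ∧
      ∀ z ∈ H, φ ((lift f)^[p] z) = Complex.exp (2 * Real.pi * θ * Complex.I) * φ z

/-- Wandering domain: a Fatou component whose forward components are pairwise distinct. -/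
def Wandering (f : ℂ → Sph) (U : Set Sph) : Prop :=
  FatouComp f U ∧
    ∀ (m n : ℕ) (V W : Set Sph), m ≠ n → IterComp f U m V → IterComp f U n W → V ≠ W

/-- Baker wandering domain: for all large `n`, `Uₙ` is bounded, multiply connected and
surrounds `0`, and `Uₙ → ∞`. -/
def BakerWandering (f : ℂ → Sph) (U : Set Sph) : Prop :=
  Wandering f U ∧
  (∃ N : ℕ, ∀ n, N ≤ n → ∀ V, IterComp f U n V →
      ∞ ∉ V ∧ Bornology.IsBounded {z : ℂ | (z : Sph) ∈ V} ∧ MultConnSet V ∧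
      ((0 : ℂ) : Sph) ∉ V ∧ ∞ ∉ connectedComponentIn Vᶜ ((0 : ℂ) : Sph)) ∧
  ∀ R : ℝ, ∃ N : ℕ, ∀ n, N ≤ n → ∀ V, IterComp f U n V →
    ∀ z : ℂ, (z : Sph) ∈ V → R ≤ ‖z‖

/-- A finite asymptotic value: `f(γ(t)) → w` along some path `γ(t) → ∞`. -/
def HasFiniteAsymptoticValue (f : ℂ → Sph) : Prop :=
  ∃ (w : ℂ) (γ : ℝ → ℂ), ContinuousOn γ (Set.Ici 0) ∧
    Filter.Tendsto γ Filter.atTop (Bornology.cobounded ℂ) ∧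
    Filter.Tendsto (fun t => f (γ t)) Filter.atTop (nhds (w : Sph))

/-- A Möbius transformation of the sphere. -/
def IsMobius (S : Sph → Sph) : Prop :=
  ∃ a b c d : ℂ, a * d - b * c ≠ 0 ∧
    (∀ z : ℂ, (c * z + d ≠ 0 → S (z : Sph) = (((a * z + b) / (c * z + d) : ℂ) : Sph)) ∧
              (c * z + d = 0 → S (z : Sph) = ∞)) ∧
    (c = 0 → S ∞ = ∞) ∧ (c ≠ 0 → S ∞ = ((a / c : ℂ) : Sph))

/-- `f` has a critical point (hence a critical value). -/
def HasCriticalValue (f : ℂ → Sph) : Prop :=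
  ∃ (c : ℂ) (g : ℂ → ℂ), AnalyticAt ℂ g c ∧ (∀ᶠ w in nhds c, f w = (g w : Sph)) ∧
    deriv g c = 0


/-! ### Auxiliary lemmas for the proof -/

namespace NBW

open Bornology

local notation "𝕔" => (fun z : ℂ => (z : Sph))

lemma exists_coe_of_ne {s : Sph} (h : s ≠ ∞) : ∃ z : ℂ, s = (z : Sph) := by
  cases s with
  | none => exact absurd rfl h
  | some z => exact ⟨z, rfl⟩

lemma lift_coe (f : ℂ → Sph) (z : ℂ) : lift f (z : Sph) = f z := rfl

variable {f : ℂ → Sph}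

lemma continuousAt_lift_coe (hf : Continuous f) (z : ℂ) :
    ContinuousAt (lift f) ((z : ℂ) : Sph) := by
  rw [OnePoint.continuousAt_coe]
  exact hf.continuousAt

lemma cobounded_eq : cobounded ℂ = Filter.coclosedCompact ℂ := by
  rw [Metric.cobounded_eq_cocompact, Filter.coclosedCompact_eq_cocompact]

lemma tendsto_coe_cobounded :
    Tendsto 𝕔 (cobounded ℂ) (nhds (∞ : Sph)) := by
  rw [cobounded_eq]; exact OnePoint.tendsto_coe_infty

/-- `s ↦ 1/(s-a)` on the sphere, with `∞ ↦ 0`. -/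
noncomputable def elimG (a : ℂ) : Sph → ℂ := fun s => Option.elim s 0 (fun c => (c - a)⁻¹)

lemma elimG_coe (a c : ℂ) : elimG a (c : Sph) = (c - a)⁻¹ := rfl
lemma elimG_infty (a : ℂ) : elimG a ∞ = 0 := rfl

lemma tendsto_sub_const_cobounded (a : ℂ) :
    Tendsto (fun c : ℂ => c - a) (cobounded ℂ) (cobounded ℂ) := by
  rw [← tendsto_norm_atTop_iff_cobounded]
  have h1 : Tendsto (fun c : ℂ => ‖c‖ - ‖a‖) (cobounded ℂ) atTop :=
    tendsto_norm_cobounded_atTop.atTop_add tendsto_const_nhds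
  exact tendsto_atTop_mono (fun c => by
    have := norm_sub_norm_le c a; linarith) h1

lemma tendsto_elimG_infty (a : ℂ) : Tendsto (elimG a) (nhds (∞ : Sph)) (nhds (0 : ℂ)) := by
  rw [OnePoint.tendsto_nhds_infty']
  refine ⟨tendsto_pure_nhds (elimG a) ∞, ?_⟩
  rw [← cobounded_eq]
  have h : (elimG a) ∘ (fun c : ℂ => (c : Sph)) = (fun c : ℂ => (c - a)⁻¹) := rfl
  rw [h]
  exact tendsto_inv₀_cobounded.comp (tendsto_sub_const_cobounded a)

lemma analyticAt_elim (hm : MeroC f) {a : ℂ} {z : ℂ} (hz : f z ≠ ∞) (hz' : f z ≠ (a : Sph)) :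
    AnalyticAt ℂ (fun w => elimG a (f w)) z := by
  obtain ⟨g, hg, hfg⟩ := hm.2.1 z hz
  have hgz : g z ≠ a := fun h => hz' (by rw [hfg.self_of_nhds, h])
  have ha : AnalyticAt ℂ (fun w => (g w - a)⁻¹) z :=
    (hg.sub analyticAt_const).inv (sub_ne_zero.mpr hgz)
  exact ha.congr (hfg.mono fun w hw => by
    show (g w - a)⁻¹ = elimG a (f w); rw [hw]; rfl)

lemma analyticAt_elim_pole (hm : MeroC f) {a : ℂ} {z : ℂ} (hz : f z = ∞)
    (hne : ∀ᶠ w in nhdsWithin z {z}ᶜ, f w ≠ (a : Sph)) :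
    AnalyticAt ℂ (fun w => elimG a (f w)) z := by
  apply Complex.analyticAt_of_differentiable_on_punctured_nhds_of_continuousAt
  · filter_upwards [hm.2.2 z hz, hne] with w hw1 hw2
    exact (analyticAt_elim hm hw1 hw2).differentiableAt
  · have h1 : Tendsto f (nhds z) (nhds (∞ : Sph)) := by
      have := hm.1.continuousAt (x := z); rwa [ContinuousAt, hz] at this
    have h2 : Tendsto (fun w => elimG a (f w)) (nhds z) (nhds 0) :=
      (tendsto_elimG_infty a).comp h1
    have h0 : elimG a (f z) = 0 := by rw [hz]; rfl
    rw [ContinuousAt, h0]; exact h2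

lemma exists_ne_infty (hm : MeroC f) : ∃ z : ℂ, f z ≠ ∞ := by
  by_contra h
  push_neg at h
  have h3 := hm.2.2 0 (h 0)
  obtain ⟨w, hw, -⟩ := (h3.and (eventually_mem_nhdsWithin)).exists
  exact hw (h w)

lemma g_entire (hm : MeroC f) {a : ℂ} (ha : OmittedC f a) :
    Differentiable ℂ (fun z => elimG a (f z)) := by
  intro z
  by_cases hz : f z = ∞
  · exact (analyticAt_elim_pole hm hz (Eventually.of_forall fun w => ha w)).differentiableAt
  · exact (analyticAt_elim hm hz (ha z)).differentiableAt

lemma not_tendsto_of_omitted (hm : MeroC f) {a : ℂ} (ha : OmittedC f a) :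
    ¬ Tendsto f (cobounded ℂ) (nhds (∞ : Sph)) := by
  intro htend
  set g : ℂ → ℂ := fun z => elimG a (f z) with hgdef
  have hg : Differentiable ℂ g := g_entire hm ha
  have hg0 : Tendsto g (cobounded ℂ) (nhds (0 : ℂ)) := (tendsto_elimG_infty a).comp htend
  -- range of g is bounded
  have hev : {z : ℂ | g z ∈ Metric.closedBall 0 1} ∈ cobounded ℂ :=
    hg0 (Metric.closedBall_mem_nhds 0 one_pos)
  have hbd1 : IsBounded {z : ℂ | g z ∈ Metric.closedBall 0 1}ᶜ := by
    rw [Bornology.isBounded_def, compl_compl]; exact hev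
  have hcomp : IsCompact (closure {z : ℂ | g z ∈ Metric.closedBall 0 1}ᶜ) :=
    Metric.isCompact_of_isClosed_isBounded isClosed_closure hbd1.closure
  have hbd2 : IsBounded (g '' closure {z : ℂ | g z ∈ Metric.closedBall 0 1}ᶜ) :=
    (hcomp.image hg.continuous).isBounded
  have hrange : IsBounded (range g) := by
    apply (hbd2.union (Metric.isBounded_closedBall (x := (0:ℂ)) (r := 1))).subset
    rintro - ⟨z, rfl⟩
    by_cases hz : g z ∈ Metric.closedBall 0 1
    · exact Or.inr hz
    · exact Or.inl ⟨z, subset_closure hz, rfl⟩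
  obtain ⟨z₀, hz₀⟩ := exists_ne_infty hm
  obtain ⟨c₀, hc₀⟩ := exists_coe_of_ne hz₀
  have hconst : ∀ z, g z = g z₀ := fun z => hg.apply_eq_apply_of_bounded hrange z z₀
  have : Tendsto g (cobounded ℂ) (nhds (g z₀)) := by
    have : g = fun _ => g z₀ := funext hconst
    rw [this]; exact tendsto_const_nhds
  have h00 : g z₀ = 0 := tendsto_nhds_unique this hg0
  have : g z₀ ≠ 0 := by
    rw [hgdef]; simp only [hc₀]
    rw [elimG_coe]
    exact inv_ne_zero (sub_ne_zero.mpr (fun h => ha z₀ (by rw [hc₀, h])))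
  exact this h00

lemma not_tendsto_of_asymp (hm : MeroC f) (h : HasFiniteAsymptoticValue f) :
    ¬ Tendsto f (cobounded ℂ) (nhds (∞ : Sph)) := by
  obtain ⟨w, γ, hγc, hgi, hγf⟩ := h
  intro htend
  have h1 : Tendsto (fun t => f (γ t)) atTop (nhds (∞ : Sph)) := htend.comp hgi
  have h2 : ((w : ℂ) : Sph) = ∞ := tendsto_nhds_unique hγf h1
  exact OnePoint.coe_ne_infty w h2

lemma infty_not_fatou (hnt : ¬ Tendsto f (cobounded ℂ) (nhds (∞ : Sph))) :
    ∞ ∉ FatouSet f := by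
  rintro ⟨O, hOopen, hOi, hOeq⟩
  have hc : ContinuousWithinAt (lift f) O ∞ := by
    have := (hOeq ∞ hOi).continuousWithinAt (i := 1)
    simpa using this
  have hca : ContinuousAt (lift f) ∞ := hc.continuousAt (hOopen.mem_nhds hOi)
  apply hnt
  have h1 : Tendsto 𝕔 (cobounded ℂ) (nhds (∞ : Sph)) := tendsto_coe_cobounded
  have h2 := (by rwa [ContinuousAt] at hca : Tendsto (lift f) (nhds ∞) (nhds (lift f ∞))).comp h1
  exact h2

lemma not_loc_const (hm : MeroC f) (htr : ¬ IsRationalC f) (z : ℂ) (c : ℂ) :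
    ¬ ∀ᶠ w in nhds z, f w = (c : Sph) := by
  intro hev
  set A : Set ℂ := {x | ∀ᶠ w in nhds x, f w = (c : Sph)} with hA
  have hAopen : IsOpen A := by
    rw [isOpen_iff_mem_nhds]; intro x hx; exact hx.eventually_nhds
  have hAclosed : IsClosed A := by
    rw [← closure_subset_iff_isClosed]
    intro x hx
    have hfx : f x = (c : Sph) := by
      have hsub : A ⊆ {w | f w = (c : Sph)} := fun y hy => hy.self_of_nhds
      have h1 : x ∈ closure {w | f w = (c : Sph)} := closure_mono hsub hx
      have hcl : IsClosed {w | f w = (c : Sph)} := isClosed_eq hm.1 continuous_const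
      rwa [hcl.closure_eq] at h1
    have hne : f x ≠ ∞ := by rw [hfx]; exact OnePoint.coe_ne_infty c
    obtain ⟨g, hg, hfg⟩ := hm.2.1 x hne
    have hev2 : ∀ᶠ w in nhds x, AnalyticAt ℂ g w ∧ f w = ((g w : ℂ) : Sph) :=
      hg.eventually_analyticAt.and hfg
    obtain ⟨r, hr, hball⟩ := Metric.eventually_nhds_iff_ball.mp hev2
    obtain ⟨y, hyA, hyball⟩ : ∃ y, y ∈ A ∧ y ∈ Metric.ball x r := by
      obtain ⟨y, hy1, hy2⟩ :=
        mem_closure_iff.mp hx (Metric.ball x r) Metric.isOpen_ball (Metric.mem_ball_self hr)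
      exact ⟨y, hy2, hy1⟩
    have han : AnalyticOnNhd ℂ g (Metric.ball x r) := fun w hw => (hball w hw).1
    have heq : g =ᶠ[nhds y] fun _ => c := by
      filter_upwards [Metric.isOpen_ball.eventually_mem hyball, hyA] with w hw1 hw2
      have h2 := (hball w hw1).2
      rw [hw2] at h2
      exact (OnePoint.coe_eq_coe.mp h2.symm)
    have heqon : EqOn g (fun _ => c) (Metric.ball x r) :=
      han.eqOn_of_preconnected_of_eventuallyEq analyticOnNhd_const
        (convex_ball x r).isPreconnected hyball heq
    show x ∈ A
    filter_upwards [Metric.ball_mem_nhds x hr] with w hw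
    rw [(hball w hw).2, heqon hw]
  have hAuniv : A = univ := (IsClopen.eq_univ ⟨hAclosed, hAopen⟩ ⟨z, hev⟩)
  apply htr
  refine ⟨Polynomial.C c, 1, one_ne_zero, fun w _ => ?_⟩
  have hw : w ∈ A := hAuniv ▸ mem_univ w
  rw [hw.self_of_nhds]
  norm_num

lemma nhds_le_map (hm : MeroC f) (htr : ¬ IsRationalC f) (x : ℂ) :
    nhds (lift f ((x : ℂ) : Sph)) ≤ Filter.map (lift f) (nhds ((x : ℂ) : Sph)) := by
  have hmapF : Filter.map (lift f) (nhds ((x : ℂ) : Sph)) = Filter.map f (nhds x) := by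
    rw [OnePoint.nhds_coe_eq, Filter.map_map]; rfl
  rw [lift_coe, hmapF]
  by_cases hx : f x = ∞
  · set k : ℂ → ℂ := fun w => elimG 0 (f w) with hk
    have hfi : Tendsto f (nhds x) (nhds (∞ : Sph)) := by
      have := hm.1.continuousAt (x := x); rwa [ContinuousAt, hx] at this
    have hne0 : ∀ᶠ w in nhds x, f w ≠ (((0 : ℂ)) : Sph) := by
      have hmem : {(((0 : ℂ)) : Sph)}ᶜ ∈ nhds (∞ : Sph) :=
        isOpen_compl_singleton.mem_nhds (by simp)
      exact hfi hmem
    have hkx : AnalyticAt ℂ k x :=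
      analyticAt_elim_pole hm hx (hne0.filter_mono nhdsWithin_le_nhds)
    have hk0 : k x = 0 := by rw [hk]; simp only [hx]; rfl
    have hkne : ∀ᶠ w in nhdsWithin x {x}ᶜ, k w ≠ 0 := by
      filter_upwards [hne0.filter_mono nhdsWithin_le_nhds, hm.2.2 x hx] with w h1 h2
      obtain ⟨cw, hcw⟩ := exists_coe_of_ne h2
      rw [hk]; simp only [hcw, elimG_coe, sub_zero]
      exact inv_ne_zero (fun h => h1 (by rw [hcw, h]))
    have hnotconst : ¬ ∀ᶠ w in nhds x, k w = k x := by
      intro hcst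
      obtain ⟨w, h1, h2⟩ := ((hcst.filter_mono nhdsWithin_le_nhds).and hkne).exists
      rw [hk0] at h1; exact h2 h1
    have hopen := hkx.eventually_constant_or_nhds_le_map_nhds.resolve_left hnotconst
    set ι : ℂ → Sph := fun c => if c = 0 then ∞ else ((c⁻¹ : ℂ) : Sph) with hι
    have hfeq : f =ᶠ[nhds x] fun w => ι (k w) := by
      filter_upwards [hne0] with w hw
      by_cases h : f w = ∞
      · have hkw : k w = 0 := by rw [hk]; simp only [h]; rfl
        rw [h, hkw, hι]; simp
      · obtain ⟨cw, hcw⟩ := exists_coe_of_ne h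
        have hcw0 : cw ≠ 0 := fun hh => hw (by rw [hcw, hh])
        rw [hcw, hk]; simp only [hcw, elimG_coe, sub_zero]
        rw [hι]; simp [inv_ne_zero hcw0, inv_inv]
    have hιlem : nhds (∞ : Sph) ≤ Filter.map ι (nhds 0) := by
      intro W hW
      rw [Filter.mem_map] at hW
      obtain ⟨δ, hδ, hball⟩ := Metric.mem_nhds_iff.mp hW
      rw [OnePoint.hasBasis_nhds_infty.mem_iff]
      refine ⟨Metric.closedBall 0 δ⁻¹, ⟨Metric.isClosed_closedBall, isCompact_closedBall _ _⟩, ?_⟩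
      rintro s (⟨c, hc, rfl⟩ | hs)
      · rw [mem_compl_iff, Metric.mem_closedBall, dist_zero_right, not_le] at hc
        have hc0 : c ≠ 0 := by
          intro h; rw [h] at hc; simp at hc
          exact absurd hc (not_lt.mpr hδ.le)
        have hinv : c⁻¹ ∈ Metric.ball (0 : ℂ) δ := by
          rw [Metric.mem_ball, dist_zero_right, norm_inv]
          rw [inv_lt_comm₀ (norm_pos_iff.mpr hc0) hδ]
          exact hc
        have := hball hinv
        rw [mem_preimage, hι] at this
        simp only [inv_eq_zero, hc0, if_false, inv_inv] at this
        exact this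
      · rw [mem_singleton_iff] at hs
        subst hs
        have h0 : (0 : ℂ) ∈ Metric.ball (0 : ℂ) δ := Metric.mem_ball_self hδ
        have := hball h0
        rw [mem_preimage, hι] at this
        simpa using this
    calc nhds (f x) = nhds (∞ : Sph) := by rw [hx]
      _ ≤ Filter.map ι (nhds 0) := hιlem
      _ = Filter.map ι (nhds (k x)) := by rw [hk0]
      _ ≤ Filter.map ι (Filter.map k (nhds x)) := Filter.map_mono hopen
      _ = Filter.map (fun w => ι (k w)) (nhds x) := by rw [Filter.map_map]; rfl
      _ = Filter.map f (nhds x) := (Filter.map_congr hfeq).symm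
  · obtain ⟨g, hg, hfg⟩ := hm.2.1 x hx
    have hgx : f x = ((g x : ℂ) : Sph) := hfg.self_of_nhds
    have hnotconst : ¬ ∀ᶠ w in nhds x, g w = g x := by
      intro hcst
      exact not_loc_const hm htr x (g x)
        (by filter_upwards [hfg, hcst] with w h1 h2; rw [h1, h2])
    have hopen := hg.eventually_constant_or_nhds_le_map_nhds.resolve_left hnotconst
    calc nhds (f x) = Filter.map 𝕔 (nhds (g x)) := by rw [hgx, OnePoint.nhds_coe_eq]
      _ ≤ Filter.map 𝕔 (Filter.map g (nhds x)) := Filter.map_mono hopen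
      _ = Filter.map (fun w => ((g w : ℂ) : Sph)) (nhds x) := by rw [Filter.map_map]; rfl
      _ = Filter.map f (nhds x) := (Filter.map_congr hfg).symm

lemma fatou_step (hm : MeroC f) (htr : ¬ IsRationalC f) {x : ℂ}
    (hx : ((x : ℂ) : Sph) ∈ FatouSet f) : lift f ((x : ℂ) : Sph) ∈ FatouSet f := by
  obtain ⟨O, hOopen, hxO, hOeq⟩ := hx
  set F := lift f with hF
  set O' := O ∩ range 𝕔 with hO'
  have hO'open : IsOpen O' := hOopen.inter OnePoint.isOpen_range_coe
  refine ⟨interior (F '' O'), isOpen_interior, ?_, ?_⟩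
  · rw [mem_interior_iff_mem_nhds]
    exact nhds_le_map hm htr x
      (Filter.image_mem_map (hO'open.mem_nhds ⟨hxO, mem_range_self x⟩))
  · intro y hy
    obtain ⟨xs, hxsO', hxsy⟩ := interior_subset hy
    obtain ⟨x', hx'⟩ := hxsO'.2
    subst hx'
    intro u hu
    have hequi := hOeq _ hxsO'.1 u hu
    rw [nhdsWithin_eq_nhds.mpr (hOopen.mem_nhds hxsO'.1)] at hequi
    have h3 : F '' {s | ∀ n : ℕ, (F^[n] ((x' : ℂ) : Sph), F^[n] s) ∈ u} ∈ nhds y := by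
      rw [← hxsy]
      exact nhds_le_map hm htr x' (Filter.image_mem_map hequi)
    refine Filter.mem_of_superset (nhdsWithin_le_nhds h3) ?_
    rintro y' ⟨s, hs, rfl⟩ n
    have h4 := hs (n + 1)
    rw [← hxsy]
    show (F^[n] (F _), F^[n] (F s)) ∈ u
    rw [← Function.iterate_succ_apply, ← Function.iterate_succ_apply]
    exact h4

lemma fatou_invariant (hm : MeroC f) (htr : ¬ IsRationalC f)
    (hinf : ∞ ∉ FatouSet f) {s : Sph} (hs : s ∈ FatouSet f) : lift f s ∈ FatouSet f := by
  obtain ⟨x, rfl⟩ := exists_coe_of_ne (fun h => hinf (h ▸ hs))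
  exact fatou_step hm htr hs

lemma contOn_lift (hm : MeroC f) (hinf : ∞ ∉ FatouSet f) :
    ContinuousOn (lift f) (FatouSet f) := by
  intro s hs
  obtain ⟨x, rfl⟩ := exists_coe_of_ne (fun h => hinf (h ▸ hs))
  exact (continuousAt_lift_coe hm.1 x).continuousWithinAt

lemma infty_mem_closure_coe {T : Set ℂ} (hT : ¬ IsBounded T) :
    (∞ : Sph) ∈ closure (𝕔 '' T) := by
  rw [mem_closure_iff_nhds]
  intro W hW
  obtain ⟨K, ⟨hKcl, hKcp⟩, hKW⟩ := OnePoint.hasBasis_nhds_infty.mem_iff.mp hW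
  have hns : ¬ T ⊆ K := fun h => hT (hKcp.isBounded.subset h)
  obtain ⟨t, htT, htK⟩ := not_subset.mp hns
  exact ⟨𝕔 t, hKW (Or.inl ⟨t, htK, rfl⟩), ⟨t, htT, rfl⟩⟩

lemma compl_coe_image (T : Set ℂ) :
    (insert (∞ : Sph) (𝕔 '' T))ᶜ = 𝕔 '' Tᶜ := by
  ext s
  cases s with
  | infty =>
      simp only [mem_compl_iff, mem_insert_iff, mem_image]
      constructor
      · intro h; exact absurd (Or.inl trivial) h
      · rintro ⟨z, _, hz⟩; exact absurd hz (OnePoint.coe_ne_infty z)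
  | coe z =>
      simp only [mem_compl_iff, mem_insert_iff, mem_image]
      constructor
      · intro h
        refine ⟨z, fun hzT => h (Or.inr ⟨z, hzT, rfl⟩), rfl⟩
      · rintro ⟨y, hy, hyz⟩
        have hyz' : y = z := OnePoint.coe_eq_coe.mp hyz
        subst hyz'
        rintro (h | ⟨x, hxT, hxz⟩)
        · exact OnePoint.coe_ne_infty y h
        · exact hy ((OnePoint.coe_eq_coe.mp hxz) ▸ hxT)

lemma closure_coe_subset (T : Set ℂ) :
    closure (𝕔 '' T) ⊆ insert (∞ : Sph) (𝕔 '' closure T) := by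
  apply closure_minimal
  · exact (image_mono subset_closure).trans (subset_insert _ _)
  · rw [← isOpen_compl_iff, compl_coe_image]
    exact OnePoint.isOpenEmbedding_coe.isOpenMap _ isClosed_closure.isOpen_compl

lemma coe_continuous : Continuous 𝕔 := OnePoint.isOpenEmbedding_coe.continuous

lemma ray_lemma {z : ℂ} (hz : z ≠ 0) :
    ∃ C : Set Sph, IsPreconnected C ∧ (∞ : Sph) ∈ C ∧ (z : Sph) ∈ C ∧
      C ⊆ insert (∞ : Sph) (𝕔 '' {w : ℂ | ‖z‖ ≤ ‖w‖}) := by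
  set T : Set ℂ := (fun t : ℝ => (t : ℂ) * z) '' Ici 1 with hT
  have hTconn : IsPreconnected T :=
    isPreconnected_Ici.image _ (Continuous.continuousOn (by continuity))
  have hTsub : T ⊆ {w : ℂ | ‖z‖ ≤ ‖w‖} := by
    rintro - ⟨t, ht, rfl⟩
    simp only [mem_setOf_eq, norm_mul, Complex.norm_real]
    rw [Real.norm_of_nonneg (by linarith [mem_Ici.mp ht])]
    nlinarith [norm_nonneg z, mem_Ici.mp ht]
  have hTunb : ¬ IsBounded T := by
    intro hbd
    obtain ⟨r, hr⟩ := hbd.subset_closedBall 0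
    set t : ℝ := max 1 ((|r| + 1) / ‖z‖) with htdef
    have ht1 : (1 : ℝ) ≤ t := le_max_left _ _
    have htmem : (t : ℂ) * z ∈ T := ⟨t, mem_Ici.mpr ht1, rfl⟩
    have := hr htmem
    rw [Metric.mem_closedBall, dist_zero_right] at this
    have hnorm : ‖(t : ℂ) * z‖ = t * ‖z‖ := by
      rw [norm_mul, Complex.norm_real, Real.norm_of_nonneg (by linarith)]
    rw [hnorm] at this
    have hzpos : 0 < ‖z‖ := norm_pos_iff.mpr hz
    have h2 : (|r| + 1) / ‖z‖ ≤ t := le_max_right _ _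
    have h3 : |r| + 1 ≤ t * ‖z‖ := by
      rw [div_le_iff₀ hzpos] at h2; linarith
    have h4 : r ≤ |r| := le_abs_self r
    linarith
  refine ⟨closure (𝕔 '' T), ((hTconn.image _ coe_continuous.continuousOn).closure), ?_, ?_, ?_⟩
  · exact infty_mem_closure_coe hTunb
  · exact subset_closure ⟨z, ⟨1, mem_Ici.mpr le_rfl, by simp⟩, rfl⟩
  · refine (closure_coe_subset T).trans (insert_subset_insert (image_mono ?_))
    exact closure_minimal hTsub (isClosed_le continuous_const continuous_norm)

lemma unbounded_component {g : ℂ → ℂ} (hg : Differentiable ℂ g) {ε : ℝ} {z₀ : ℂ}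
    (hzg : ε < ‖g z₀‖) :
    ¬ IsBounded (connectedComponentIn {z : ℂ | ε < ‖g z‖} z₀) := by
  set G := {z : ℂ | ε < ‖g z‖} with hG
  have hGopen : IsOpen G := isOpen_lt continuous_const hg.continuous.norm
  set C := connectedComponentIn G z₀ with hC
  have hCopen : IsOpen C := hGopen.connectedComponentIn
  intro hbd
  have hfr : ∀ w ∈ frontier C, ‖g w‖ ≤ ε := by
    intro w hw
    by_contra hgt
    push_neg at hgt
    have hwG : w ∈ G := hgt
    have hD : connectedComponentIn G w ∈ nhds w :=
      hGopen.connectedComponentIn.mem_nhds (mem_connectedComponentIn hwG)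
    obtain ⟨y, hyD, hyC⟩ := mem_closure_iff_nhds.mp hw.1 _ hD
    have h1 : connectedComponentIn G w = connectedComponentIn G y := connectedComponentIn_eq hyD
    have h2 : C = connectedComponentIn G y := connectedComponentIn_eq hyC
    have hwC : w ∈ C := by rw [h2, ← h1]; exact mem_connectedComponentIn hwG
    rw [frontier, hCopen.interior_eq] at hw
    exact hw.2 hwC
  have hle : ‖g z₀‖ ≤ ε :=
    Complex.norm_le_of_forall_mem_frontier_norm_le hbd hg.diffContOnCl hfr
      (subset_closure (mem_connectedComponentIn (show z₀ ∈ G from hzg)))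
  exact absurd hle (not_le.mpr hzg)

end NBW

/-- A transcendental meromorphic function with a finite asymptotic value
(in particular, with an omitted value) has no Baker wandering domain. -/
theorem finite_asymptotic_value_no_Baker_wandering
    (f : ℂ → Sph) (hf : TranscMero f)
    (h : HasFiniteAsymptoticValue f ∨ ∃ a : ℂ, OmittedC f a) :
    ¬ ∃ U : Set Sph, BakerWandering f U := by
  classical
  obtain ⟨hm, htr⟩ := hf
  rintro ⟨U, ⟨⟨hUcomp, -⟩, ⟨N₂, h2⟩, h3⟩⟩
  have hnt : ¬ Tendsto f (Bornology.cobounded ℂ) (nhds (∞ : Sph)) := by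
    rcases h with h' | ⟨a, ha⟩
    · exact NBW.not_tendsto_of_asymp hm h'
    · exact NBW.not_tendsto_of_omitted hm ha
  have hinf : (∞ : Sph) ∉ FatouSet f := NBW.infty_not_fatou hnt
  obtain ⟨w₀, hw₀, hUeq⟩ := hUcomp
  set F := lift f with hF
  have hw₀U : w₀ ∈ U := hUeq ▸ mem_connectedComponentIn hw₀
  have horb : ∀ n : ℕ, F^[n] '' U ⊆ FatouSet f ∧ IsPreconnected (F^[n] '' U) := by
    intro n
    induction n with
    | zero =>
        simp only [Function.iterate_zero, image_id]
        exact ⟨hUeq ▸ connectedComponentIn_subset _ _, hUeq ▸ isPreconnected_connectedComponentIn⟩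
    | succ n ih =>
        have himg : F^[n+1] '' U = F '' (F^[n] '' U) := by
          rw [Function.iterate_succ', Set.image_comp]
        constructor
        · rw [himg]; rintro - ⟨s, hs, rfl⟩
          exact NBW.fatou_invariant hm htr hinf (ih.1 hs)
        · rw [himg]
          exact ih.2.image F ((NBW.contOn_lift hm hinf).mono ih.1)
  have horbpt : ∀ n : ℕ, F^[n] w₀ ∈ FatouSet f := fun n => (horb n).1 ⟨w₀, hw₀U, rfl⟩
  set V : ℕ → Set Sph := fun n => connectedComponentIn (FatouSet f) (F^[n] w₀) with hV
  have hVcomp : ∀ n, IterComp f U n (V n) := by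
    intro n
    exact ⟨⟨F^[n] w₀, horbpt n, rfl⟩,
      (horb n).2.subset_connectedComponentIn ⟨w₀, hw₀U, rfl⟩ (horb n).1⟩
  have hVsub : ∀ n, V n ⊆ FatouSet f := fun n => connectedComponentIn_subset _ _
  have hVmaps : ∀ n, ∀ s ∈ V n, F s ∈ V (n + 1) := by
    intro n s hs
    have hconn : IsPreconnected (F '' V n) :=
      isPreconnected_connectedComponentIn.image F ((NBW.contOn_lift hm hinf).mono (hVsub n))
    have hsubF : F '' V n ⊆ FatouSet f := by
      rintro - ⟨t, ht, rfl⟩; exact NBW.fatou_invariant hm htr hinf (hVsub n ht)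
    have hmem : F (F^[n] w₀) ∈ F '' V n := ⟨_, mem_connectedComponentIn (horbpt n), rfl⟩
    have hsub2 := hconn.subset_connectedComponentIn hmem hsubF
    have he : F^[n+1] w₀ = F (F^[n] w₀) := Function.iterate_succ_apply' F n w₀
    show F s ∈ connectedComponentIn (FatouSet f) (F^[n+1] w₀)
    rw [he]
    exact hsub2 ⟨s, hs, rfl⟩
  have hcontr : ∀ n, N₂ ≤ n → ∀ E : Set Sph, IsPreconnected E → (((0:ℂ)) : Sph) ∈ E →
      (∞ : Sph) ∈ E → E ⊆ (V n)ᶜ → False := by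
    intro n hn E hE h0 hi hEsub
    obtain ⟨-, -, -, -, h05⟩ := h2 n hn (V n) (hVcomp n)
    exact h05 ((hE.subset_connectedComponentIn h0 hEsub) hi)
  have hA₁pre : ∀ R : ℝ, IsPreconnected ((fun z : ℂ => (z : Sph)) '' Metric.ball 0 R) :=
    fun R => ((convex_ball (0:ℂ) R).isPreconnected).image _ NBW.coe_continuous.continuousOn
  rcases h with ⟨wv, γ, hγc, hgi, hγf⟩ | ⟨a, ha⟩
  · -- asymptotic value branch
    have hball1 : (fun z : ℂ => (z : Sph)) '' Metric.ball wv 1 ∈ nhds ((wv : ℂ) : Sph) :=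
      (OnePoint.isOpenEmbedding_coe.isOpenMap _ Metric.isOpen_ball).mem_nhds
        ⟨wv, Metric.mem_ball_self one_pos, rfl⟩
    have hev := hγf hball1
    rw [Filter.mem_map] at hev
    obtain ⟨T₀, hT₀⟩ := Filter.eventually_atTop.mp hev
    have hcpt : IsCompact (γ '' Icc 0 (max T₀ 0)) :=
      isCompact_Icc.image_of_continuousOn (hγc.mono (Icc_subset_Ici_self))
    obtain ⟨M, hM⟩ := hcpt.isBounded.subset_closedBall 0
    have hγ0M : ‖γ 0‖ ≤ M := by
      have := hM ⟨0, ⟨le_rfl, le_max_right _ _⟩, rfl⟩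
      rwa [Metric.mem_closedBall, dist_zero_right] at this
    have hM0 : 0 ≤ M := le_trans (norm_nonneg _) hγ0M
    set R : ℝ := M + 1 with hRdef
    set R' : ℝ := ‖wv‖ + 1 with hR'def
    obtain ⟨N₃, hN₃⟩ := h3 R
    obtain ⟨N₄, hN₄⟩ := h3 R'
    set n : ℕ := max N₂ (max N₃ N₄) with hndef
    obtain ⟨h21, h22, -, -, -⟩ := h2 n (le_max_left _ _) (V n) (hVcomp n)
    obtain ⟨R₂, hR₂⟩ := h22.subset_closedBall 0
    have hnorm3 : ∀ z : ℂ, (z : Sph) ∈ V n → R ≤ ‖z‖ := by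
      intro z hz
      exact hN₃ n (le_trans (le_max_left _ _) (le_max_right _ _)) (V n) (hVcomp n) z hz
    by_cases hhit : ∃ t, 0 ≤ t ∧ ((γ t : ℂ) : Sph) ∈ V n
    · obtain ⟨t, ht0, htV⟩ := hhit
      have hRt : R ≤ ‖γ t‖ := hnorm3 _ htV
      have htbig : max T₀ 0 < t := by
        by_contra hle
        push_neg at hle
        have := hM ⟨t, ⟨ht0, hle⟩, rfl⟩
        rw [Metric.mem_closedBall, dist_zero_right] at this
        rw [hRdef] at hRt; linarith
      have hfγ : f (γ t) ∈ (fun z : ℂ => (z : Sph)) '' Metric.ball wv 1 :=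
        hT₀ t (le_trans (le_max_left _ _) htbig.le)
      obtain ⟨c, hc1, hc2⟩ := hfγ
      have hc2' : ((c : ℂ) : Sph) = f (γ t) := hc2
      have hmem2 : ((c : ℂ) : Sph) ∈ V (n + 1) := by
        rw [hc2']
        exact hVmaps n _ htV
      have hcR' : R' ≤ ‖c‖ :=
        hN₄ (n + 1)
          (le_trans (le_trans (le_max_right _ _) (le_max_right _ _)) (Nat.le_succ n)) (V (n+1))
          (hVcomp (n+1)) c hmem2
      rw [Metric.mem_ball, dist_eq_norm] at hc1
      have : ‖c‖ ≤ ‖c - wv‖ + ‖wv‖ := by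
        have := norm_add_le (c - wv) wv; simpa using this
      rw [hR'def] at hcR'; linarith
    · push_neg at hhit
      have hz₁ex : ∃ t₁, 0 ≤ t₁ ∧ max R₂ 0 + 1 ≤ ‖γ t₁‖ := by
        have h1 : Tendsto (fun t => ‖γ t‖) atTop atTop :=
          tendsto_norm_cobounded_atTop.comp hgi
        obtain ⟨t₁, ht₁⟩ :=
          ((h1.eventually_ge_atTop (max R₂ 0 + 1)).and (eventually_ge_atTop 0)).exists
        exact ⟨t₁, ht₁.2, ht₁.1⟩
      obtain ⟨t₁, ht₁0, ht₁n⟩ := hz₁ex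
      have hz₁ne : γ t₁ ≠ 0 := by
        intro hh
        rw [hh] at ht₁n; simp at ht₁n
        have : (0:ℝ) ≤ max R₂ 0 := le_max_right _ _
        linarith
      obtain ⟨C, hCconn, hCi, hCz, hCsub⟩ := NBW.ray_lemma hz₁ne
      have hA₂pre : IsPreconnected ((fun z : ℂ => (z : Sph)) '' (γ '' Ici 0)) :=
        (isPreconnected_Ici.image γ hγc).image _ NBW.coe_continuous.continuousOn
      have hE₁ : IsPreconnected ((fun z : ℂ => (z : Sph)) '' Metric.ball 0 R ∪
          (fun z : ℂ => (z : Sph)) '' (γ '' Ici 0)) := by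
        apply IsPreconnected.union ((γ 0 : ℂ) : Sph)
        · exact ⟨γ 0, by rw [Metric.mem_ball, dist_zero_right, hRdef]; linarith, rfl⟩
        · exact ⟨γ 0, ⟨0, self_mem_Ici, rfl⟩, rfl⟩
        · exact hA₁pre R
        · exact hA₂pre
      have hE : IsPreconnected (((fun z : ℂ => (z : Sph)) '' Metric.ball 0 R ∪
          (fun z : ℂ => (z : Sph)) '' (γ '' Ici 0)) ∪ C) := by
        apply IsPreconnected.union ((γ t₁ : ℂ) : Sph)
        · exact Or.inr ⟨γ t₁, ⟨t₁, ht₁0, rfl⟩, rfl⟩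
        · exact hCz
        · exact hE₁
        · exact hCconn
      apply hcontr n (le_max_left _ _) _ hE
      · refine Or.inl (Or.inl ⟨0, ?_, rfl⟩)
        rw [Metric.mem_ball, dist_zero_right, hRdef]
        simp only [norm_zero]
        linarith
      · exact Or.inr hCi
      · rintro s hs
        rcases hs with (⟨z, hz, rfl⟩ | ⟨-, ⟨t, ht, rfl⟩, rfl⟩) | hsC
        · intro hmem
          have := hnorm3 z hmem
          rw [Metric.mem_ball, dist_zero_right] at hz
          linarith
        · exact hhit t ht
        · rcases hCsub hsC with hsi | ⟨w, hw, rfl⟩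
          · rw [hsi]; exact h21
          · intro hmem
            have h5 := hR₂ hmem
            rw [Metric.mem_closedBall, dist_zero_right] at h5
            rw [mem_setOf_eq] at hw
            have : R₂ ≤ max R₂ 0 := le_max_left _ _
            linarith
  · -- omitted value branch
    set g : ℂ → ℂ := fun z => NBW.elimG a (f z) with hgdef
    have hg : Differentiable ℂ g := NBW.g_entire hm ha
    obtain ⟨z₀, hz₀⟩ := NBW.exists_ne_infty hm
    obtain ⟨c₀, hc₀⟩ := NBW.exists_coe_of_ne hz₀
    have hgz₀ : g z₀ ≠ 0 := by
      rw [hgdef]; simp only [hc₀]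
      rw [NBW.elimG_coe]
      exact inv_ne_zero (sub_ne_zero.mpr (fun hh => ha z₀ (by rw [hc₀, hh])))
    set ε : ℝ := ‖g z₀‖ / 2 with hεdef
    have hε0 : 0 < ε := by
      rw [hεdef]; have := norm_pos_iff.mpr hgz₀; linarith
    have hz₀G : ε < ‖g z₀‖ := by
      rw [hεdef]; have := norm_pos_iff.mpr hgz₀; linarith
    set G : Set ℂ := {z : ℂ | ε < ‖g z‖} with hGdef
    set C : Set ℂ := connectedComponentIn G z₀ with hCdef
    have hunb : ¬ Bornology.IsBounded C := NBW.unbounded_component hg hz₀G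
    set R : ℝ := ‖z₀‖ + 1 with hRdef
    set R' : ℝ := ‖a‖ + 2 / ε with hR'def
    obtain ⟨N₃, hN₃⟩ := h3 R
    obtain ⟨N₄, hN₄⟩ := h3 R'
    set n : ℕ := max N₂ (max N₃ N₄) with hndef
    obtain ⟨h21, -, -, -, -⟩ := h2 n (le_max_left _ _) (V n) (hVcomp n)
    have hnorm3 : ∀ z : ℂ, (z : Sph) ∈ V n → R ≤ ‖z‖ := fun z hz =>
      hN₃ n (le_trans (le_max_left _ _) (le_max_right _ _)) (V n) (hVcomp n) z hz
    -- on V n, |g| is small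
    have hsmall : ∀ z : ℂ, (z : Sph) ∈ V n → ‖g z‖ ≤ ε / 2 := by
      intro z hz
      have hmem2 : F ((z : ℂ) : Sph) ∈ V (n + 1) := hVmaps n _ hz
      have hne : F ((z : ℂ) : Sph) ≠ ∞ := fun hh => hinf (hh ▸ hVsub (n+1) hmem2)
      obtain ⟨c, hc⟩ := NBW.exists_coe_of_ne hne
      have hfz : f z = ((c : ℂ) : Sph) := hc
      have hcR' : R' ≤ ‖c‖ :=
        hN₄ (n + 1)
          (le_trans (le_trans (le_max_right _ _) (le_max_right _ _)) (Nat.le_succ n)) (V (n+1))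
          (hVcomp (n+1)) c (hc ▸ hmem2)
      have hca : 2 / ε ≤ ‖c - a‖ := by
        have h6 := norm_sub_norm_le c a
        rw [hR'def] at hcR'; linarith
      have hgz : g z = (c - a)⁻¹ := by
        rw [hgdef]; simp only [hfz]; rw [NBW.elimG_coe]
      rw [hgz, norm_inv]
      have h7 : (0:ℝ) < 2 / ε := by positivity
      calc ‖c - a‖⁻¹ ≤ (2 / ε)⁻¹ := by
            apply inv_anti₀ h7 hca
        _ = ε / 2 := by rw [inv_div]
    have hA₂pre : IsPreconnected (closure ((fun z : ℂ => (z : Sph)) '' C)) :=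
      (isPreconnected_connectedComponentIn.image _ NBW.coe_continuous.continuousOn).closure
    have hz₀C : z₀ ∈ C := mem_connectedComponentIn hz₀G
    have hE : IsPreconnected ((fun z : ℂ => (z : Sph)) '' Metric.ball 0 R ∪
        closure ((fun z : ℂ => (z : Sph)) '' C)) := by
      apply IsPreconnected.union ((z₀ : ℂ) : Sph)
      · exact ⟨z₀, by rw [Metric.mem_ball, dist_zero_right, hRdef]; linarith, rfl⟩
      · exact subset_closure ⟨z₀, hz₀C, rfl⟩
      · exact hA₁pre R
      · exact hA₂pre
    apply hcontr n (le_max_left _ _) _ hE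
    · refine Or.inl ⟨0, ?_, rfl⟩
      rw [Metric.mem_ball, dist_zero_right, hRdef]
      simp only [norm_zero]
      linarith [norm_nonneg z₀]
    · exact Or.inr (NBW.infty_mem_closure_coe hunb)
    · rintro s hs
      rcases hs with ⟨z, hz, rfl⟩ | hsA₂
      · intro hmem
        have := hnorm3 z hmem
        rw [Metric.mem_ball, dist_zero_right] at hz
        linarith
      · rcases NBW.closure_coe_subset C hsA₂ with hsi | ⟨w, hw, rfl⟩
        · rw [hsi]; exact h21
        · intro hmem
          have h8 : ε ≤ ‖g w‖ := by
            have hcl : closure C ⊆ {z : ℂ | ε ≤ ‖g z‖} := by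
              apply closure_minimal
              · refine (connectedComponentIn_subset _ _).trans (fun y hy => ?_)
                rw [hGdef, mem_setOf_eq] at hy
                show ε ≤ ‖g y‖
                exact le_of_lt hy
              · exact isClosed_le continuous_const hg.continuous.norm
            exact hcl hw
          have h9 := hsmall w hmem
          linarith

end
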